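/- Suppose k ≥ 2 and set K = U_2 ⊕ ⋯ ⊕ U_{k-1} ⊕ 𝓩(𝓗_n). For any g, g' ∈ K and any x ∈ U_1, inf{ d_A(g*s, g'*t) : s, t ∈ U_1 } = inf{ d_A(g*x, g'*t) : t ∈ U_1 } = d_A(g, g'); that is, the minimal distance between the left cosets g*U_1 and g'*U_1 is realized from every point of g*U_1 and equals d_A(g, g'). -/

import Mathlib

open scoped BigOperators RealInnerProductSpace ENNReal
open Module Filter

noncomputable section

/-- The underlying space of the `n`-th Heisenberg group/algebra: `ℝ^{2n+1}`
with a fixed inner product. -/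
abbrev HV (n : ℕ) : Type := EuclideanSpace ℝ (Fin (2 * n + 1))

/-- `br` is a Heisenberg Lie bracket on `ℝ^{2n+1}`: with respect to some basis
`b`, the only nontrivial bracket relations are `[b_{2s}, b_{2s+1}] = b_{2n}` (0-indexed). -/
def IsHeisenbergBracket (n : ℕ) (br : HV n →ₗ[ℝ] HV n →ₗ[ℝ] HV n) : Prop :=
  ∃ b : Basis (Fin (2 * n + 1)) ℝ (HV n),
    ∀ i j : Fin (2 * n + 1),
      br (b i) (b j) =
        (if (i : ℕ) % 2 = 0 ∧ (j : ℕ) = (i : ℕ) + 1 ∧ (i : ℕ) < 2 * n then (1 : ℝ)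
         else if (j : ℕ) % 2 = 0 ∧ (i : ℕ) = (j : ℕ) + 1 ∧ (j : ℕ) < 2 * n then (-1 : ℝ)
         else 0) • b ⟨2 * n, by omega⟩

/-- `A` is a derivation of the Lie algebra `(ℝ^{2n+1}, br)`. -/
def IsDerivation {n : ℕ} (br : HV n →ₗ[ℝ] HV n →ₗ[ℝ] HV n)
    (A : HV n →ₗ[ℝ] HV n) : Prop :=
  ∀ x y, A (br x y) = br (A x) y + br x (A y)

/-- The group product `x * y = x + y + (1/2)[x,y]` (BCH formula). -/
def hMul {n : ℕ} (br : HV n →ₗ[ℝ] HV n →ₗ[ℝ] HV n) (x y : HV n) : HV n :=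
  x + y + (2⁻¹ : ℝ) • br x y

/-- The left coset `g * S`. -/
def leftCoset {n : ℕ} (br : HV n →ₗ[ℝ] HV n →ₗ[ℝ] HV n) (g : HV n)
    (S : Set (HV n)) : Set (HV n) :=
  hMul br g '' S

/-- `‖x‖_A = Σ_i |x_i|^{1/α_i}`, where `x_i` is the component of `x` in the
eigenspace `U i` (computed as the orthogonal projection; the eigenspaces are
assumed mutually orthogonal with sum everything). -/
def normA {n k : ℕ} (α : Fin (k + 1) → ℝ) (U : Fin (k + 1) → Submodule ℝ (HV n))
    (x : HV n) : ℝ :=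
  ∑ i, ‖((U i).orthogonalProjectionOnto x : HV n)‖ ^ (α i)⁻¹

/-- The parabolic visual quasimetric `d_A(p,q) = ‖(-p) * q‖_A`. -/
def qd {n k : ℕ} (br : HV n →ₗ[ℝ] HV n →ₗ[ℝ] HV n) (α : Fin (k + 1) → ℝ)
    (U : Fin (k + 1) → Submodule ℝ (HV n)) (p q : HV n) : ℝ :=
  normA α U (hMul br (-p) q)

/-- `η` is a homeomorphism of `[0,∞)` onto itself. -/
def IsHomeoOfNonneg (η : ℝ → ℝ) : Prop :=
  η 0 = 0 ∧ StrictMonoOn η (Set.Ici 0) ∧ ContinuousOn η (Set.Ici 0) ∧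
    ∀ s : ℝ, 0 ≤ s → ∃ t : ℝ, 0 ≤ t ∧ η t = s

/-- `F` is an `η`-quasisymmetry from `(X, d1)` to `(X, d2)`. -/
def IsQS {X : Type*} (d1 d2 : X → X → ℝ) (η : ℝ → ℝ) (F : X → X) : Prop :=
  Function.Bijective F ∧
    ∀ x y z : X, x ≠ y → y ≠ z → x ≠ z →
      d2 (F x) (F y) / d2 (F x) (F z) ≤ η (d1 x y / d1 x z)

/-- `L_F(x,r) = sup { d2(F x, F x') : d1(x,x') ≤ r }`. -/
def LFr {X : Type*} (d1 d2 : X → X → ℝ) (F : X → X) (x : X) (r : ℝ) : ℝ≥0∞ :=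
  ⨆ (x' : X) (_ : d1 x x' ≤ r), ENNReal.ofReal (d2 (F x) (F x'))

/-- `l_F(x,r) = inf { d2(F x, F x') : d1(x,x') ≥ r }`. -/
def lFr {X : Type*} (d1 d2 : X → X → ℝ) (F : X → X) (x : X) (r : ℝ) : ℝ≥0∞ :=
  ⨅ (x' : X) (_ : r ≤ d1 x x'), ENNReal.ofReal (d2 (F x) (F x'))

/-- `L_F(x) = limsup_{r→0⁺} L_F(x,r)/r`. -/
def LF {X : Type*} (d1 d2 : X → X → ℝ) (F : X → X) (x : X) : ℝ≥0∞ :=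
  Filter.limsup (fun r : ℝ => LFr d1 d2 F x r / ENNReal.ofReal r) (nhdsWithin 0 (Set.Ioi 0))

/-- `l_F(x) = liminf_{r→0⁺} l_F(x,r)/r`. -/
def lF {X : Type*} (d1 d2 : X → X → ℝ) (F : X → X) (x : X) : ℝ≥0∞ :=
  Filter.liminf (fun r : ℝ => lFr d1 d2 F x r / ENNReal.ofReal r) (nhdsWithin 0 (Set.Ioi 0))

namespace Stmt16Aux

lemma br_antisymm {n : ℕ} {br : HV n →ₗ[ℝ] HV n →ₗ[ℝ] HV n}
    (hbr : IsHeisenbergBracket n br) : ∀ x y : HV n, br x y = - br y x := by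
  obtain ⟨b, hb⟩ := hbr
  have h : br = -br.flip := by
    apply LinearMap.ext_basis b b
    intro i j
    simp only [LinearMap.neg_apply, LinearMap.flip_apply]
    rw [hb i j, hb j i, ← neg_smul]
    congr 1
    split_ifs <;> first | (exfalso; omega) | norm_num
  intro x y
  conv_lhs => rw [h]
  simp only [LinearMap.neg_apply, LinearMap.flip_apply]

lemma exists_center {n : ℕ} {br : HV n →ₗ[ℝ] HV n →ₗ[ℝ] HV n}
    (hbr : IsHeisenbergBracket n br) :
    ∃ e : HV n, e ≠ 0 ∧ (∀ y, br e y = 0) ∧ (∀ x y : HV n, br x y ∈ (ℝ ∙ e)) ∧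
      LinearMap.ker br ≤ (ℝ ∙ e) := by
  classical
  obtain ⟨b, hb⟩ := hbr
  set i2n : Fin (2 * n + 1) := ⟨2 * n, by omega⟩ with hi2ndef
  have hi2n : (i2n : ℕ) = 2 * n := rfl
  set e : HV n := b i2n with he
  refine ⟨e, b.ne_zero _, ?_, ?_, ?_⟩
  · -- br e y = 0
    have h : br e = 0 := by
      apply b.ext
      intro j
      have hj := j.isLt
      rw [he, hb, if_neg (by omega), if_neg (by omega), zero_smul, LinearMap.zero_apply]
    intro y; rw [h]; rfl
  · -- range ⊆ span e
    intro x y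
    have hz : br.compr₂ (ℝ ∙ e).mkQ = 0 := by
      apply LinearMap.ext_basis b b
      intro i j
      have hmk : Submodule.mkQ (ℝ ∙ e) e = 0 :=
        (Submodule.Quotient.mk_eq_zero _).mpr (Submodule.mem_span_singleton_self e)
      simp only [LinearMap.compr₂_apply, hb i j, map_smul, LinearMap.zero_apply]
      rw [hmk, smul_zero]
    have h2 : Submodule.mkQ (ℝ ∙ e) (br x y) = 0 := by
      have := LinearMap.congr_fun₂ hz x y
      simpa using this
    rw [Submodule.mkQ_apply, Submodule.Quotient.mk_eq_zero] at h2
    exact h2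
  · -- ker ⊆ span e
    intro z hz
    have hzb : ∀ y, br z y = 0 := by
      intro y
      have h : br z = 0 := LinearMap.mem_ker.mp hz
      rw [h]; rfl
    have hcoef : ∀ i : Fin (2 * n + 1), (i : ℕ) ≠ 2 * n → b.repr z i = 0 := by
      intro i hi
      have hi' := i.isLt
      have key : ∀ j : Fin (2 * n + 1), br z (b j) =
          (∑ i' : Fin (2 * n + 1), (b.repr z i') •
            ((if (i' : ℕ) % 2 = 0 ∧ (j : ℕ) = (i' : ℕ) + 1 ∧ (i' : ℕ) < 2 * n then (1 : ℝ)
              else if (j : ℕ) % 2 = 0 ∧ (i' : ℕ) = (j : ℕ) + 1 ∧ (j : ℕ) < 2 * n then (-1 : ℝ)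
              else 0) • e)) := by
        intro j
        conv_lhs => rw [← b.sum_repr z]
        rw [map_sum, LinearMap.sum_apply]
        refine Finset.sum_congr rfl fun i' _ => ?_
        rw [map_smul, LinearMap.smul_apply, hb i' j]
      rcases Nat.mod_two_eq_zero_or_one (i : ℕ) with hpar | hpar
      · -- even, pair with j = i+1
        set j : Fin (2 * n + 1) := ⟨(i : ℕ) + 1, by omega⟩ with hjdef
        have hjv : (j : ℕ) = (i : ℕ) + 1 := rfl
        have h0 := hzb (b j)
        rw [key j, Finset.sum_eq_single i] at h0
        · rw [if_pos ⟨hpar, hjv, by omega⟩, one_smul] at h0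
          exact (smul_eq_zero.mp h0).resolve_right (b.ne_zero _)
        · intro i' _ hne
          have hne' : (i' : ℕ) ≠ (i : ℕ) := fun h => hne (Fin.ext h)
          rw [if_neg (by omega), if_neg (by omega), zero_smul, smul_zero]
        · intro h; exact absurd (Finset.mem_univ i) h
      · -- odd, pair with j = i-1
        set j : Fin (2 * n + 1) := ⟨(i : ℕ) - 1, by omega⟩ with hjdef
        have hjv : (j : ℕ) = (i : ℕ) - 1 := rfl
        have h0 := hzb (b j)
        rw [key j, Finset.sum_eq_single i] at h0
        · rw [if_neg (by omega), if_pos ⟨by omega, by omega, by omega⟩] at h0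
          rw [smul_smul] at h0
          have := (smul_eq_zero.mp h0).resolve_right (b.ne_zero _)
          have : b.repr z i = 0 := by
            have h' : b.repr z i * -1 = 0 := this
            linarith
          exact this
        · intro i' _ hne
          have hne' : (i' : ℕ) ≠ (i : ℕ) := fun h => hne (Fin.ext h)
          rw [if_neg (by omega), if_neg (by omega), zero_smul, smul_zero]
        · intro h; exact absurd (Finset.mem_univ i) h
    have hzr := b.sum_repr z
    rw [← hzr]
    apply Submodule.sum_mem
    intro i' _
    by_cases hc : (i' : ℕ) = 2 * n
    · have : b i' = e := by rw [he]; congr 1; exact Fin.ext (by rw [hc, hi2n])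
      rw [this]
      exact Submodule.smul_mem _ _ (Submodule.mem_span_singleton_self e)
    · rw [hcoef i' hc, zero_smul]; exact Submodule.zero_mem _

end Stmt16Aux

theorem stmt16
    (n k : ℕ) (hn : 1 ≤ n) (hk : 1 ≤ k)
    (br : HV n →ₗ[ℝ] HV n →ₗ[ℝ] HV n) (hbr : IsHeisenbergBracket n br)
    (A : HV n →ₗ[ℝ] HV n) (hA : IsDerivation br A)
    (α : Fin (k + 1) → ℝ) (hαmono : StrictMono α) (hαpos : ∀ i, 0 < α i)
    (U : Fin (k + 1) → Submodule ℝ (HV n))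
    (hU : ∀ i, U i = Module.End.eigenspace A (α i))
    (hUne : ∀ i, U i ≠ ⊥) (hUspan : (⨆ i, U i) = ⊤)
    (hUorth : ∀ i j, i ≠ j → ∀ x ∈ U i, ∀ y ∈ U j, (inner ℝ x y : ℝ) = 0)
    (hbrnorm : ∀ x y : HV n, ‖br x y‖ ≤ ‖x‖ * ‖y‖)
    (hk2 : 2 ≤ k)
    (g g' : HV n)
    (hg : g ∈ ((⨆ i : Fin (k + 1), if 1 ≤ (i : ℕ) ∧ (i : ℕ) + 1 < k then U i else ⊥) ⊔
      LinearMap.ker br : Submodule ℝ (HV n)))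
    (hg' : g' ∈ ((⨆ i : Fin (k + 1), if 1 ≤ (i : ℕ) ∧ (i : ℕ) + 1 < k then U i else ⊥) ⊔
      LinearMap.ker br : Submodule ℝ (HV n)))
    (x : HV n) (hx : x ∈ U 0) :
    IsGLB {d : ℝ | ∃ s ∈ U 0, ∃ t ∈ U 0, d = qd br α U (hMul br g s) (hMul br g' t)}
      (qd br α U g g') ∧
    IsGLB {d : ℝ | ∃ t ∈ U 0, d = qd br α U (hMul br g x) (hMul br g' t)}
      (qd br α U g g') := by
  classical
  obtain ⟨e, he0, hbre, hrange, hker⟩ := Stmt16Aux.exists_center hbr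
  have hanti := Stmt16Aux.br_antisymm hbr
  -- eigen basics
  have hUeig : ∀ i, ∀ u ∈ U i, A u = α i • u := fun i u hu =>
    Module.End.mem_eigenspace_iff.mp (by rw [← hU i]; exact hu)
  have hUdisj : ∀ i j, i ≠ j → ∀ u, u ∈ U i → u ∈ U j → u = 0 := by
    intro i j hij u hui huj
    have h1 := hUeig i u hui
    have h2 := hUeig j u huj
    have h12 : α i • u = α j • u := by rw [← h1, ← h2]
    have h3 : (α i - α j) • u = 0 := by rw [sub_smul, h12, sub_self]
    exact (smul_eq_zero.mp h3).resolve_left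
      (sub_ne_zero.mpr (fun h => hij (hαmono.injective h)))
  have hdecomp : ∀ v : HV n, ∃ f : Fin (k + 1) → HV n,
      (∀ i, f i ∈ U i) ∧ ∑ i, f i = v := by
    intro v
    have hv : v ∈ ⨆ i, U i := hUspan ▸ Submodule.mem_top
    obtain ⟨f, hf, hsum⟩ := (Submodule.mem_iSup_iff_exists_finsupp U v).mp hv
    exact ⟨f, hf, by rwa [Finsupp.sum_fintype _ _ (fun i => rfl)] at hsum⟩
  have horthosum : ∀ f : Fin (k + 1) → HV n, (∀ i, f i ∈ U i) → ∑ i, f i = 0 →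
      ∀ i, f i = 0 := by
    intro f hf hsumz i
    have h1 : (inner ℝ (f i) (∑ j, f j) : ℝ) = ‖f i‖ ^ 2 := by
      rw [inner_sum, Finset.sum_eq_single i]
      · exact real_inner_self_eq_norm_sq _
      · intro j _ hj
        exact hUorth i j (Ne.symm hj) (f i) (hf i) (f j) (hf j)
      · intro h; exact absurd (Finset.mem_univ i) h
    rw [hsumz, inner_zero_right] at h1
    exact norm_eq_zero.mp ((pow_eq_zero_iff (two_ne_zero)).mp h1.symm)
  -- projections
  have hproj_zero' : ∀ (i : Fin (k + 1)) (v : HV n), v ∈ (U i)ᗮ →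
      (((U i).orthogonalProjectionOnto v : HV n)) = 0 := fun i v hv => by
    rw [Submodule.orthogonalProjectionOnto_apply_of_mem_orthogonal hv]; rfl
  have hUiorthle : ∀ i j : Fin (k + 1), i ≠ j → U j ≤ (U i)ᗮ := by
    intro i j hij v hv
    rw [Submodule.mem_orthogonal]
    intro u hu
    exact hUorth i j hij u hu v hv
  have hproj_self : ∀ (i : Fin (k + 1)) (v : HV n), v ∈ U i →
      (((U i).orthogonalProjectionOnto v : HV n)) = v := fun i v hv =>
    Submodule.starProjection_eq_self_iff.mpr hv
  -- A e = lam • e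
  obtain ⟨lam, hlam⟩ : ∃ lam : ℝ, A e = lam • e := by
    have h1 : br (A e) = 0 := by
      apply LinearMap.ext
      intro y
      have h2 := hA e y
      rw [hbre y, map_zero, hbre (A y), add_zero] at h2
      rw [← h2]; rfl
    have h3 : A e ∈ ℝ ∙ e := hker (LinearMap.mem_ker.mpr h1)
    obtain ⟨lam, hl⟩ := Submodule.mem_span_singleton.mp h3
    exact ⟨lam, hl.symm⟩
  have hspanlam : ∀ w ∈ (ℝ ∙ e), A w = lam • w := by
    intro w hw
    obtain ⟨c, rfl⟩ := Submodule.mem_span_singleton.mp hw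
    rw [map_smul, hlam, smul_comm]
  have hbreig : ∀ (i j : Fin (k + 1)) (u v : HV n), u ∈ U i → v ∈ U j →
      A (br u v) = (α i + α j) • br u v := by
    intro i j u v hu hv
    have h1 := hA u v
    rw [hUeig i u hu, hUeig j v hv] at h1
    simp only [map_smul, LinearMap.smul_apply] at h1
    rw [add_smul]
    exact h1
  have hbrlam : ∀ (i j : Fin (k + 1)) (u v : HV n), u ∈ U i → v ∈ U j →
      br u v ≠ 0 → α i + α j = lam := by
    intro i j u v hu hv hne
    have h1 := hbreig i j u v hu hv
    have h2 := hspanlam _ (hrange u v)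
    have h3 : (α i + α j - lam) • br u v = 0 := by
      rw [sub_smul, ← h1, ← h2, sub_self]
    exact sub_eq_zero.mp ((smul_eq_zero.mp h3).resolve_right hne)
  -- locate e in a single eigenspace
  obtain ⟨f, hf, hfe⟩ := hdecomp e
  have hfz : ∀ i, (α i - lam) • f i = 0 := by
    apply horthosum _ (fun i => Submodule.smul_mem _ _ (hf i))
    have h1 : A e = ∑ i, α i • f i := by
      conv_lhs => rw [← hfe]
      rw [map_sum]
      exact Finset.sum_congr rfl fun i _ => hUeig i (f i) (hf i)
    have h2 : A e = ∑ i, lam • f i := by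
      rw [hlam]
      conv_lhs => rw [← hfe]
      rw [Finset.smul_sum]
    calc ∑ i, (α i - lam) • f i = ∑ i, (α i • f i - lam • f i) := by
          refine Finset.sum_congr rfl fun i _ => ?_
          rw [sub_smul]
      _ = (∑ i, α i • f i) - ∑ i, lam • f i := Finset.sum_sub_distrib ..
      _ = 0 := by rw [← h1, ← h2, sub_self]
  obtain ⟨i0, hi0ne⟩ : ∃ i0, f i0 ≠ 0 := by
    by_contra hc
    push_neg at hc
    exact he0 (by rw [← hfe]; exact Finset.sum_eq_zero fun i _ => hc i)
  have hlam0 : lam = α i0 := by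
    rcases smul_eq_zero.mp (hfz i0) with h | h
    · exact (sub_eq_zero.mp h).symm
    · exact absurd h hi0ne
  have hei0 : e ∈ U i0 := by
    have hj0 : ∀ j, j ≠ i0 → f j = 0 := by
      intro j hj
      rcases smul_eq_zero.mp (hfz j) with h | h
      · have hαj : α j = α i0 := by rw [sub_eq_zero.mp h, hlam0]
        exact absurd (hαmono.injective hαj) hj
      · exact h
    rw [← hfe]
    apply Submodule.sum_mem
    intro j _
    by_cases hj : j = i0
    · subst hj; exact hf j
    · rw [hj0 j hj]; exact Submodule.zero_mem _
  -- partner existence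
  have hpartner : ∀ i : Fin (k + 1), i ≠ i0 → ∃ j, α i + α j = lam := by
    intro i hi
    obtain ⟨u, hu, hune⟩ := (Submodule.ne_bot_iff _).mp (hUne i)
    have hbru : br u ≠ 0 := by
      intro hbz
      have h1 : u ∈ ℝ ∙ e := hker (LinearMap.mem_ker.mpr hbz)
      have hu2 : u ∈ U i0 := by
        obtain ⟨c, rfl⟩ := Submodule.mem_span_singleton.mp h1
        exact Submodule.smul_mem _ _ hei0
      exact hune (hUdisj i i0 hi u hu hu2)
    obtain ⟨v, hv⟩ : ∃ v, br u v ≠ 0 := by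
      by_contra hc
      push_neg at hc
      exact hbru (LinearMap.ext hc)
    obtain ⟨fv, hfv, hfvsum⟩ := hdecomp v
    obtain ⟨j, hj⟩ : ∃ j, br u (fv j) ≠ 0 := by
      by_contra hc
      push_neg at hc
      apply hv
      rw [← hfvsum, map_sum]
      exact Finset.sum_eq_zero fun j _ => hc j
    exact ⟨j, hbrlam i j u (fv j) hu (hfv j) hj⟩
  -- i0 is the last index
  have hi0last : i0 = Fin.last k := by
    by_contra hc
    obtain ⟨j, hj⟩ := hpartner (Fin.last k) (fun h => hc h.symm)
    have h1 : α i0 ≤ α (Fin.last k) := hαmono.monotone (Fin.le_last i0)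
    have h2 : 0 < α j := hαpos j
    rw [hlam0] at hj
    linarith
  have helast : e ∈ U (Fin.last k) := hi0last ▸ hei0
  -- key bracket vanishing
  have hzero : ∀ (i : Fin (k + 1)), (i : ℕ) + 2 ≤ k → ∀ u ∈ U i, ∀ v ∈ U 0,
      br u v = 0 := by
    intro i hik u hu v hv
    by_contra hne
    have h1 : α i + α 0 = lam := hbrlam i 0 u v hu hv hne
    have hkm1ne : (⟨k - 1, by omega⟩ : Fin (k + 1)) ≠ i0 := by
      rw [hi0last]
      intro hEq
      have := congrArg Fin.val hEq
      simp only [Fin.val_last] at this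
      omega
    obtain ⟨j, hj⟩ := hpartner ⟨k - 1, by omega⟩ hkm1ne
    have h2 : α i < α (⟨k - 1, by omega⟩ : Fin (k + 1)) := by
      apply hαmono
      rw [Fin.lt_def]
      simp only []
      omega
    have h3 : α 0 ≤ α j := hαmono.monotone (Fin.zero_le j)
    linarith
  have h0val : ((0 : Fin (k + 1)) : ℕ) = 0 := rfl
  -- facts about elements of K' = Msub ⊔ ker br
  have hKbr : ∀ w, w ∈ ((⨆ i : Fin (k + 1), if 1 ≤ (i : ℕ) ∧ (i : ℕ) + 1 < k then U i else ⊥) ⊔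
      LinearMap.ker br : Submodule ℝ (HV n)) → ∀ v ∈ U 0, br w v = 0 := by
    intro w hw v hv
    have hle : ((⨆ i : Fin (k + 1), if 1 ≤ (i : ℕ) ∧ (i : ℕ) + 1 < k then U i else ⊥) ⊔
        LinearMap.ker br : Submodule ℝ (HV n)) ≤ LinearMap.ker (br.flip v) := by
      apply sup_le
      · apply iSup_le
        intro i
        by_cases hi : 1 ≤ (i : ℕ) ∧ (i : ℕ) + 1 < k
        · rw [if_pos hi]
          intro u hu
          rw [LinearMap.mem_ker, LinearMap.flip_apply]
          exact hzero i (by omega) u hu v hv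
        · rw [if_neg hi]; exact bot_le
      · intro z hz
        rw [LinearMap.mem_ker] at hz ⊢
        rw [LinearMap.flip_apply, hz, LinearMap.zero_apply]
    have := hle hw
    rwa [LinearMap.mem_ker, LinearMap.flip_apply] at this
  have hKbr' : ∀ w, w ∈ ((⨆ i : Fin (k + 1), if 1 ≤ (i : ℕ) ∧ (i : ℕ) + 1 < k then U i else ⊥) ⊔
      LinearMap.ker br : Submodule ℝ (HV n)) → ∀ v ∈ U 0, br v w = 0 := by
    intro w hw v hv
    rw [hanti, hKbr w hw v hv, neg_zero]
  have h0last : (0 : Fin (k + 1)) ≠ Fin.last k := by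
    intro h
    have := congrArg Fin.val h
    simp only [Fin.val_last] at this
    omega
  have hspanle : (ℝ ∙ e) ≤ (U 0)ᗮ := by
    rw [Submodule.span_singleton_le_iff_mem]
    exact hUiorthle 0 (Fin.last k) h0last helast
  have hKle : ((⨆ i : Fin (k + 1), if 1 ≤ (i : ℕ) ∧ (i : ℕ) + 1 < k then U i else ⊥) ⊔
      LinearMap.ker br : Submodule ℝ (HV n)) ≤ (U 0)ᗮ := by
    apply sup_le
    · apply iSup_le
      intro i
      by_cases hi : 1 ≤ (i : ℕ) ∧ (i : ℕ) + 1 < k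
      · rw [if_pos hi]
        refine hUiorthle 0 i ?_
        intro h
        have := congrArg Fin.val h
        rw [h0val] at this
        omega
      · rw [if_neg hi]; exact bot_le
    · exact le_trans hker hspanle
  have hm0 : (((U 0).orthogonalProjectionOnto (hMul br (-g) g') : HV n)) = 0 := by
    apply hproj_zero'
    show hMul br (-g) g' ∈ (U 0)ᗮ
    have h1 : -g ∈ (U 0)ᗮ := Submodule.neg_mem _ (hKle hg)
    have h2 : g' ∈ (U 0)ᗮ := hKle hg'
    have h3 : br (-g) g' ∈ (U 0)ᗮ := hspanle (hrange _ _)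
    exact Submodule.add_mem _ (Submodule.add_mem _ h1 h2) (Submodule.smul_mem _ _ h3)
  -- the coset distance formula
  have hcform : ∀ s ∈ U 0, ∀ t ∈ U 0,
      qd br α U (hMul br g s) (hMul br g' t) = ‖t - s‖ ^ (α 0)⁻¹ + qd br α U g g' := by
    intro s hs t ht
    have hgs : hMul br g s = g + s := by
      simp [hMul, hKbr g hg s hs]
    have hgt : hMul br g' t = g' + t := by
      simp [hMul, hKbr g' hg' t ht]
    have hbrexp : br (-(g + s)) (g' + t) = -br g g' := by
      have e1 : br g t = 0 := hKbr g hg t ht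
      have e2 : br s g' = 0 := hKbr' g' hg' s hs
      have e3 : br s t = 0 := hzero 0 (by omega) s hs t ht
      simp [map_add, map_neg, LinearMap.add_apply, LinearMap.neg_apply, e1, e2, e3]
    have hw : hMul br (-(hMul br g s)) (hMul br g' t) = hMul br (-g) g' + (t - s) := by
      rw [hgs, hgt]
      show -(g + s) + (g' + t) + (2⁻¹ : ℝ) • br (-(g + s)) (g' + t) =
        (-g + g' + (2⁻¹ : ℝ) • br (-g) g') + (t - s)
      have hng : br (-g) g' = -br g g' := by
        simp [map_neg, LinearMap.neg_apply]
      rw [hbrexp, hng]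
      module
    show normA α U (hMul br (-(hMul br g s)) (hMul br g' t)) =
      ‖t - s‖ ^ (α 0)⁻¹ + normA α U (hMul br (-g) g')
    rw [hw]
    unfold normA
    have hts : t - s ∈ U 0 := Submodule.sub_mem _ ht hs
    have hPadd : ∀ i : Fin (k + 1),
        (((U i).orthogonalProjectionOnto (hMul br (-g) g' + (t - s)) : HV n)) =
        (((U i).orthogonalProjectionOnto (hMul br (-g) g') : HV n)) +
        (((U i).orthogonalProjectionOnto (t - s) : HV n)) := by
      intro i
      rw [map_add]
      rfl
    rw [← Finset.sum_erase_add _ _ (Finset.mem_univ (0 : Fin (k + 1))),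
        ← Finset.sum_erase_add _ _ (Finset.mem_univ (0 : Fin (k + 1)))]
    have hterm0 : ‖(((U 0).orthogonalProjectionOnto (hMul br (-g) g' + (t - s)) : HV n))‖ ^ (α 0)⁻¹ =
        ‖t - s‖ ^ (α 0)⁻¹ := by
      rw [hPadd 0, hm0, hproj_self 0 _ hts, zero_add]
    have htermm0 : ‖(((U 0).orthogonalProjectionOnto (hMul br (-g) g') : HV n))‖ ^ (α 0)⁻¹ = 0 := by
      rw [hm0, norm_zero, Real.zero_rpow (inv_ne_zero (ne_of_gt (hαpos 0)))]
    have herase : ∀ i ∈ Finset.univ.erase (0 : Fin (k + 1)),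
        ‖(((U i).orthogonalProjectionOnto (hMul br (-g) g' + (t - s)) : HV n))‖ ^ (α i)⁻¹ =
        ‖(((U i).orthogonalProjectionOnto (hMul br (-g) g') : HV n))‖ ^ (α i)⁻¹ := by
      intro i hi
      have hne : i ≠ 0 := Finset.ne_of_mem_erase hi
      rw [hPadd i, hproj_zero' i _ (hUiorthle i 0 hne hts), add_zero]
    rw [Finset.sum_congr rfl herase, hterm0, htermm0, add_zero]
    ring
  have hrp0 : ‖(0 : HV n)‖ ^ (α 0)⁻¹ = 0 := by
    rw [norm_zero, Real.zero_rpow (inv_ne_zero (ne_of_gt (hαpos 0)))]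
  -- lower bound
  have hval : ∀ s ∈ U 0, ∀ t ∈ U 0,
      qd br α U g g' ≤ qd br α U (hMul br g s) (hMul br g' t) := by
    intro s hs t ht
    rw [hcform s hs t ht]
    have := Real.rpow_nonneg (norm_nonneg (t - s)) (α 0)⁻¹
    linarith
  have hself : ∀ s ∈ U 0, qd br α U (hMul br g s) (hMul br g' s) = qd br α U g g' := by
    intro s hs
    rw [hcform s hs s hs, sub_self, hrp0, zero_add]
  constructor
  · apply IsLeast.isGLB
    constructor
    · exact ⟨0, Submodule.zero_mem _, 0, Submodule.zero_mem _,
        (hself 0 (Submodule.zero_mem _)).symm⟩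
    · rintro d ⟨s, hs, t, ht, rfl⟩
      exact hval s hs t ht
  · apply IsLeast.isGLB
    constructor
    · exact ⟨x, hx, (hself x hx).symm⟩
    · rintro d ⟨t, ht, rfl⟩
      exact hval x hx t ht
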